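/- Let α ∈ [0,1) and D > 0, and define t : ℝ → ℝ by t(x) = min(D/2, max(-D/2, x + exp(αx/D))). Then for all x, y ∈ [-D/2, D/2], |t(x) - t(y)| ≤ (1 + α·max(|t(x) - x|, |t(y) - y|)/D)·|x - y|. -/

import Mathlib

/-- The univariate operator `t(x) = clip(x + exp(αx/D))`, where `clip` is the
projection onto `[-D/2, D/2]`, is α-gradually expansive on `[-D/2, D/2]`. -/
theorem clipped_exp_shift_gradually_expansive
    (α : ℝ) (hα0 : 0 ≤ α) (hα1 : α < 1) (D : ℝ) (hD : 0 < D)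
    (t : ℝ → ℝ)
    (ht : ∀ x : ℝ, t x = min (D / 2) (max (-(D / 2)) (x + Real.exp (α * x / D)))) :
    ∀ x ∈ Set.Icc (-(D / 2)) (D / 2), ∀ y ∈ Set.Icc (-(D / 2)) (D / 2),
      |t x - t y| ≤ (1 + α * max |t x - x| |t y - y| / D) * |x - y| := by
  have ht' : ∀ x ∈ Set.Icc (-(D / 2)) (D / 2),
      t x = min (D / 2) (x + Real.exp (α * x / D)) := by
    intro x hx
    rw [ht x, max_eq_right]
    have := Real.exp_pos (α * x / D)
    linarith [hx.1]
  have key : ∀ x ∈ Set.Icc (-(D / 2)) (D / 2), ∀ y ∈ Set.Icc (-(D / 2)) (D / 2), y ≤ x →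
      |t x - t y| ≤ (1 + α * max |t x - x| |t y - y| / D) * |x - y| := by
    intro x hx y hy hyx
    obtain ⟨ex, hex⟩ : ∃ e : ℝ, Real.exp (α * x / D) = e := ⟨_, rfl⟩
    obtain ⟨ey, hey⟩ : ∃ e : ℝ, Real.exp (α * y / D) = e := ⟨_, rfl⟩
    have hexpos : 0 < ex := hex ▸ Real.exp_pos _
    have heypos : 0 < ey := hey ▸ Real.exp_pos _
    have heyx : ey ≤ ex := by
      rw [← hex, ← hey]
      apply Real.exp_le_exp.2
      gcongr
    have htx := ht' x hx
    have hty := ht' y hy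
    rw [hex] at htx
    rw [hey] at hty
    have htxx : x ≤ t x := by
      rw [htx]
      exact le_min hx.2 (by linarith)
    have htyy : y ≤ t y := by
      rw [hty]
      exact le_min hy.2 (by linarith)
    have hmono : t y ≤ t x := by
      rw [htx, hty]
      exact min_le_min le_rfl (by linarith)
    have hMx : t x - x ≤ max |t x - x| |t y - y| :=
      le_trans (le_abs_self _) (le_max_left _ _)
    have hM0 : 0 ≤ max |t x - x| |t y - y| := le_trans (abs_nonneg _) (le_max_left _ _)
    rw [abs_of_nonneg (by linarith : (0:ℝ) ≤ t x - t y),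
        abs_of_nonneg (by linarith : (0:ℝ) ≤ x - y)]
    have step : t x - t y ≤ (1 + α * (t x - x) / D) * (x - y) → t x - t y ≤
        (1 + α * max |t x - x| |t y - y| / D) * (x - y) := by
      intro h
      refine h.trans ?_
      gcongr
    apply step
    obtain ⟨u, hu⟩ : ∃ u : ℝ, α * (x - y) / D = u := ⟨_, rfl⟩
    have hu0 : 0 ≤ u := by
      rw [← hu]
      exact div_nonneg (mul_nonneg hα0 (by linarith)) hD.le
    have heq : ey = ex * Real.exp (-u) := by
      rw [← hex, ← hey, ← Real.exp_add]
      congr 1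
      rw [← hu]
      field_simp
      ring
    have hexpu : 1 - u ≤ Real.exp (-u) := by linarith [Real.add_one_le_exp (-u)]
    rcases le_or_gt (x + ex) (D / 2) with hb | hb
    · -- no clipping at x, hence none at y
      have htx' : t x = x + ex := by rw [htx, min_eq_right hb]
      have hty' : t y = y + ey := by rw [hty, min_eq_right (by linarith)]
      rw [htx', hty']
      have h1 : ex - ey ≤ ex * u := by rw [heq]; nlinarith
      have e1 : (1 + α * (x + ex - x) / D) * (x - y) = (x - y) + ex * u := by
        rw [← hu]
        field_simp
        ring
      linarith
    · -- clipping at x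
      have htx' : t x = D / 2 := by rw [htx, min_eq_left (le_of_lt hb)]
      rcases le_or_gt (D / 2) (y + ey) with ha | ha
      · have hty' : t y = D / 2 := by rw [hty, min_eq_left ha]
        rw [htx', hty']
        have h1 : 0 ≤ α * (D / 2 - x) / D :=
          div_nonneg (mul_nonneg hα0 (by linarith [hx.2])) hD.le
        have h2 : 0 ≤ (1 + α * (D / 2 - x) / D) * (x - y) :=
          mul_nonneg (by linarith) (by linarith)
        linarith
      · have hty' : t y = y + ey := by rw [hty, min_eq_right (le_of_lt ha)]
        rw [htx', hty']
        have hdx : D / 2 - x < ex := by linarith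
        have hdx0 : 0 ≤ D / 2 - x := by linarith [hx.2]
        have hru : (1 + α * (D / 2 - x) / D) * (x - y) = (x - y) + (D / 2 - x) * u := by
          rw [← hu]
          field_simp
        rw [hru]
        rcases le_or_gt 1 u with h1 | h1
        · nlinarith
        · have h2 : (D / 2 - x) * (1 - u) ≤ ey := by
            rw [heq]
            nlinarith
          nlinarith
  intro x hx y hy
  rcases le_total y x with h | h
  · exact key x hx y hy h
  · rw [abs_sub_comm (t x), abs_sub_comm x, max_comm]
    exact key y hy x hx h
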